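/- Let M and S be the (N−1)×(N−1) mass and stiffness matrices with M_{mn} = ∫ψ_{n+1}ψ_{m+1} and S_{mn} = ∫φ_n'φ_m'. Then for 1 ≤ m ≤ N−3 and all 1 ≤ n ≤ N−1, (MS)_{mn} = δ_{mn}; that is, the first N−3 rows of MS coincide with those of the identity matrix. -/

import Mathlib

open Polynomial MeasureTheory intervalIntegral

/-- The Legendre polynomial of degree `n` (Rodrigues formula). -/
noncomputable def legendre (n : ℕ) : Polynomial ℝ :=
  C ((1 : ℝ) / (2 ^ n * n.factorial)) * derivative^[n] ((X ^ 2 - 1) ^ n)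

/-- `ψ_{m+1}(ξ) = (1/√(2(2m+1))) (L_{m+1}(ξ) − L_{m−1}(ξ))`. -/
noncomputable def psiF (m : ℕ) (x : ℝ) : ℝ :=
  (Real.sqrt (2 * (2 * (m : ℝ) + 1)))⁻¹ *
    ((legendre (m + 1)).eval x - (legendre (m - 1)).eval x)

/-- The normalized Legendre function `φ_m(ξ) = √((2m+1)/2) L_m(ξ)`. -/
noncomputable def phiF (m : ℕ) (x : ℝ) : ℝ :=
  Real.sqrt ((2 * (m : ℝ) + 1) / 2) * (legendre m).eval x

/-- The `(N−1)×(N−1)` mass matrix `M_{mn} = ∫ ψ_{n+1} ψ_{m+1}`,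
with index `i : Fin (N−1)` corresponding to `m = i + 1`. -/
noncomputable def massMatrix (N : ℕ) : Matrix (Fin (N - 1)) (Fin (N - 1)) ℝ :=
  Matrix.of fun i j => ∫ x in (-1 : ℝ)..1, psiF ((j : ℕ) + 1) x * psiF ((i : ℕ) + 1) x

/-- The `(N−1)×(N−1)` stiffness matrix `S_{mn} = ∫ φ_n' φ_m'`. -/
noncomputable def stiffMatrix (N : ℕ) : Matrix (Fin (N - 1)) (Fin (N - 1)) ℝ :=
  Matrix.of fun i j =>
    ∫ x in (-1 : ℝ)..1, deriv (phiF ((j : ℕ) + 1)) x * deriv (phiF ((i : ℕ) + 1)) x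

lemma polyII (p : Polynomial ℝ) (a b : ℝ) :
    IntervalIntegrable (fun x => p.eval x) volume a b :=
  p.continuous.intervalIntegrable a b

lemma integral_parts (p q : Polynomial ℝ) :
    (∫ x in (-1:ℝ)..1, (derivative p).eval x * q.eval x)
      = p.eval 1 * q.eval 1 - p.eval (-1) * q.eval (-1)
        - ∫ x in (-1:ℝ)..1, p.eval x * (derivative q).eval x := by
  have h : ∀ x ∈ Set.uIcc (-1:ℝ) 1, HasDerivAt (fun y => p.eval y * q.eval y)
      ((derivative p).eval x * q.eval x + p.eval x * (derivative q).eval x) x := by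
    intro x _
    exact (p.hasDerivAt x).mul (q.hasDerivAt x)
  have hint : IntervalIntegrable
      (fun x => (derivative p).eval x * q.eval x + p.eval x * (derivative q).eval x)
      volume (-1) 1 :=
    (((derivative p).continuous.mul q.continuous).add
      (p.continuous.mul (derivative q).continuous)).intervalIntegrable _ _
  have := intervalIntegral.integral_eq_sub_of_hasDerivAt h hint
  rw [intervalIntegral.integral_add (f := fun x => (derivative p).eval x * q.eval x)
      (g := fun x => p.eval x * (derivative q).eval x)
      (((derivative p).continuous.mul q.continuous).intervalIntegrable _ _)
      ((p.continuous.mul (derivative q).continuous).intervalIntegrable _ _)] at this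
  linarith


lemma dvd_iter_deriv (n : ℕ) : ∀ j ≤ n, ∃ r : Polynomial ℝ,
    derivative^[j] ((X^2-1)^n) = (X^2-1)^(n-j) * r := by
  intro j hj
  induction j with
  | zero => exact ⟨1, by simp⟩
  | succ k ih =>
    obtain ⟨r, hr⟩ := ih (Nat.le_of_succ_le hj)
    refine ⟨((n-k : ℕ) : ℝ[X]) * (2*X) * r + (X^2-1) * derivative r, ?_⟩
    have hnk : n - k = (n - (k+1)) + 1 := by omega
    rw [Function.iterate_succ_apply', hr, hnk]
    simp only [derivative_mul, derivative_pow, derivative_sub, derivative_one,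
      derivative_X, Nat.add_sub_cancel, C_eq_natCast, mul_one, sub_zero]
    push_cast
    ring
lemma eval_iter_deriv_zero (n j : ℕ) (hj : j < n) (x : ℝ) (hx : x^2 - 1 = 0) :
    (derivative^[j] ((X^2-1:ℝ[X])^n)).eval x = 0 := by
  obtain ⟨r, hr⟩ := dvd_iter_deriv n j (le_of_lt hj)
  have h2 : n - j = (n - j - 1) + 1 := by omega
  rw [hr, h2]
  simp [hx]



lemma shift_parts (n : ℕ) (q : Polynomial ℝ) : ∀ k ≤ n,
    (∫ x in (-1:ℝ)..1, (derivative^[n] ((X^2-1:ℝ[X])^n)).eval x * q.eval x)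
      = (-1)^k * ∫ x in (-1:ℝ)..1,
          (derivative^[n-k] ((X^2-1:ℝ[X])^n)).eval x * (derivative^[k] q).eval x := by
  intro k hk
  induction k with
  | zero => simp
  | succ k ih =>
    rw [ih (Nat.le_of_succ_le hk)]
    have h1 : n - k = (n - (k+1)) + 1 := by omega
    have h2 : derivative^[n-k] ((X^2-1:ℝ[X])^n)
        = derivative (derivative^[n-(k+1)] ((X^2-1:ℝ[X])^n)) := by
      rw [h1, Function.iterate_succ_apply']
    rw [h2, integral_parts]
    rw [eval_iter_deriv_zero n _ (by omega) 1 (by norm_num),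
        eval_iter_deriv_zero n _ (by omega) (-1) (by norm_num)]
    rw [← Function.iterate_succ_apply' derivative k q]
    ring




lemma natDegree_legendre_le (n : ℕ) : (legendre n).natDegree ≤ n := by
  unfold legendre
  apply le_trans (natDegree_C_mul_le _ _)
  apply le_trans (natDegree_iterate_derivative _ _)
  have h1 : ((X^2-1 : ℝ[X])^n).natDegree ≤ 2*n := by
    apply le_trans (natDegree_pow_le)
    have : (X^2-1 : ℝ[X]).natDegree ≤ 2 := by
      apply le_trans (natDegree_sub_le _ _); simp
    nlinarith
  omega


lemma Jint (n : ℕ) : (∫ x in (-1:ℝ)..1, ((X^2-1:ℝ[X])^n).eval x)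
    = (-1)^n * (2 * 4^n * (n.factorial)^2 / ((2*n+1).factorial)) := by
  induction n with
  | zero => norm_num
  | succ n ih =>
    have hc : ∀ k : ℕ, Continuous (fun x : ℝ => (x^2-1)^k) := by
      intro k; fun_prop
    simp only [eval_pow, eval_sub, eval_one, eval_X] at ih ⊢
    have hd : derivative (X * (X^2-1:ℝ[X])^(n+1))
        = (2*(n:ℝ[X])+3) * (X^2-1)^(n+1) + (2*(n:ℝ[X])+2) * (X^2-1)^n := by
      simp only [derivative_mul, derivative_pow, derivative_sub, derivative_one,
        derivative_X, Nat.add_sub_cancel, C_eq_natCast, mul_one, sub_zero]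
      push_cast
      ring
    have h0 := integral_parts (X * (X^2-1:ℝ[X])^(n+1)) 1
    rw [hd] at h0
    simp only [eval_one, mul_one, derivative_one, mul_zero, intervalIntegral.integral_zero,
      sub_zero, eval_add, eval_mul, eval_X, eval_pow, eval_sub, one_pow, eval_natCast,
      eval_ofNat] at h0
    norm_num at h0
    rw [intervalIntegral.integral_add (f := fun x : ℝ => (2*(n:ℝ)+3) * (x^2-1)^(n+1))
          (g := fun x : ℝ => (2*(n:ℝ)+2) * (x^2-1)^n)
          ((continuous_const.mul (hc (n+1))).intervalIntegrable _ _)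
          ((continuous_const.mul (hc n)).intervalIntegrable _ _),
        intervalIntegral.integral_const_mul, intervalIntegral.integral_const_mul, ih] at h0
    have h3 : (2*(n:ℝ)+3) ≠ 0 := by positivity
    have hfac : (((2*(n+1)+1).factorial : ℕ) : ℝ) = (2*(n:ℝ)+3) * ((2*(n:ℝ)+2) * ((2*n+1).factorial)) := by
      rw [show 2*(n+1)+1 = (2*n+2)+1 by ring, Nat.factorial_succ,
          show 2*n+2 = (2*n+1)+1 by ring, Nat.factorial_succ]
      push_cast; ring
    have hfacpos : (0:ℝ) < ((2*n+1).factorial : ℝ) := by positivity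
    have hkey : (∫ x in (-1:ℝ)..1, ((x:ℝ)^2-1)^(n+1))
        = -((2*(n:ℝ)+2) * ((-1)^n * (2 * 4^n * (n.factorial)^2 / ((2*n+1).factorial)))) / (2*(n:ℝ)+3) := by
      rw [eq_div_iff h3]
      linarith
    rw [hkey, hfac]
    simp only [Nat.factorial_succ, pow_succ]
    push_cast
    field_simp
    ring



lemma legendre_mul_integral (n : ℕ) (q : ℝ[X]) :
    (∫ x in (-1:ℝ)..1, (legendre n).eval x * q.eval x)
      = (1 / (2^n * n.factorial) : ℝ) * (-1)^n
          * ∫ x in (-1:ℝ)..1, ((X^2-1:ℝ[X])^n).eval x * (derivative^[n] q).eval x := by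
  unfold legendre
  simp only [eval_mul, eval_C, mul_assoc]
  rw [intervalIntegral.integral_const_mul, shift_parts n q n le_rfl]
  simp [mul_assoc]

lemma legendre_orth (n : ℕ) (q : ℝ[X]) (hq : q.natDegree < n) :
    (∫ x in (-1:ℝ)..1, (legendre n).eval x * q.eval x) = 0 := by
  rw [legendre_mul_integral, iterate_derivative_eq_zero hq]
  simp

lemma natDegree_sq : ((X^2-1:ℝ[X])^n).natDegree = 2*n := by
  rw [show (1:ℝ[X]) = C 1 by simp, natDegree_pow, natDegree_X_pow_sub_C]
  ring

lemma iter_deriv_top (n : ℕ) :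
    derivative^[2*n] ((X^2-1:ℝ[X])^n) = C (((2*n).factorial : ℝ)) := by
  have hdeg : (derivative^[2*n] ((X^2-1:ℝ[X])^n)).natDegree ≤ 0 := by
    have := natDegree_iterate_derivative ((X^2-1:ℝ[X])^n) (2*n)
    rw [natDegree_sq] at this
    omega
  have hm : ((X^2-1:ℝ[X])^n).coeff (2*n) = 1 := by
    have hmo : ((X^2-1:ℝ[X])^n).Monic := by
      have := (monic_X_pow_sub_C (1:ℝ) (two_ne_zero)).pow (n := n)
      simpa using this
    have := hmo.coeff_natDegree
    rwa [natDegree_sq] at this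
  rw [eq_C_of_natDegree_le_zero hdeg]
  congr 1
  rw [coeff_iterate_derivative]
  simp [hm, Nat.descFactorial_self]

lemma legendre_norm (n : ℕ) :
    (∫ x in (-1:ℝ)..1, (legendre n).eval x * (legendre n).eval x) = 2/(2*(n:ℝ)+1) := by
  rw [legendre_mul_integral]
  unfold legendre
  rw [iterate_derivative_C_mul, ← Function.iterate_add_apply, show n+n=2*n by ring,
    iter_deriv_top, ← C_mul]
  simp only [eval_C]
  rw [intervalIntegral.integral_mul_const, Jint]
  have h1 : ((2*n+1).factorial : ℝ) = (2*(n:ℝ)+1) * ((2*n).factorial) := by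
    rw [Nat.factorial_succ]; push_cast; ring
  have h2 : (0:ℝ) < ((2*n).factorial : ℝ) := by positivity
  have h3 : (0:ℝ) < ((n).factorial : ℝ) := by positivity
  have h4 : (0:ℝ) < (2:ℝ)^n := by positivity
  have h5 : (2*(n:ℝ)+1) > 0 := by positivity
  rw [h1]
  have h6 : ((4:ℝ))^n = 2^n * 2^n := by rw [← mul_pow]; norm_num
  have h7 : ((-1:ℝ))^(n*2) = 1 := Even.neg_one_pow ⟨n, by ring⟩
  field_simp [h6, h7]
  ring_nf
  rw [h7]
  ring_nf; rw [pow_mul']; norm_num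



lemma factor_pow (n : ℕ) : ((X^2-1:ℝ[X])^n) = (X - C 1)^n * (X - C (-1))^n := by
  rw [← mul_pow]
  congr 1
  simp only [map_neg, map_one]
  ring

lemma A1 (n : ℕ) : (derivative^[n] ((X^2-1:ℝ[X])^n)).eval 1 = 2^n * n.factorial := by
  rw [factor_pow, iterate_derivative_mul, eval_finset_sum]
  rw [Finset.sum_eq_single 0]
  · simp only [Nat.choose_zero_right, one_smul, Nat.sub_zero, Function.iterate_zero, id_eq,
      iterate_derivative_X_sub_pow_self, eval_smul, eval_mul, eval_pow, eval_sub, eval_X,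
      eval_C, eval_natCast, nsmul_eq_mul, smul_eq_mul]
    push_cast
    ring
  · intro k hk hk0
    have hkle : k ≤ n := by simp at hk; omega
    have he : n - (n - k) = k := by omega
    simp only [iterate_derivative_X_sub_pow, he, smul_mul_smul_comm, eval_smul, eval_mul,
      eval_pow, eval_sub, eval_X, eval_C, sub_self, zero_pow hk0]
    simp
  · intro h; simp at h

lemma A2 (n : ℕ) : (derivative^[n] ((X^2-1:ℝ[X])^n)).eval (-1) = (-2)^n * n.factorial := by
  rw [factor_pow, iterate_derivative_mul, eval_finset_sum]
  rw [Finset.sum_eq_single n]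
  · simp only [Nat.choose_self, one_smul, Nat.sub_self, Function.iterate_zero, id_eq,
      iterate_derivative_X_sub_pow_self, eval_smul, eval_mul, eval_pow, eval_sub, eval_X,
      eval_C, eval_natCast, nsmul_eq_mul, smul_eq_mul]
    push_cast
    ring
  · intro k hk hk0
    have hkle : k ≤ n := by simp at hk; omega
    have hnk : n - k ≠ 0 := by omega
    simp only [iterate_derivative_X_sub_pow, smul_mul_smul_comm, eval_smul, eval_mul,
      eval_pow, eval_sub, eval_X, eval_C]
    rw [show (-1 : ℝ) - (-1) = 0 by ring, zero_pow hnk]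
    simp
  · intro h; simp at h

lemma B1 (n : ℕ) : (derivative^[n+2] ((X^2-1:ℝ[X])^(n+1))).eval 1
    = (n+2) * ((n+1) * (2^n * (n+1).factorial)) := by
  rw [factor_pow, iterate_derivative_mul, eval_finset_sum]
  rw [Finset.sum_eq_single 1]
  · have h1 : (n+2) - 1 = n + 1 := by omega
    rw [h1, iterate_derivative_X_sub_pow_self]
    simp only [Function.iterate_one, iterate_derivative_X_sub_pow, Nat.descFactorial_one,
      eval_smul, eval_mul, eval_pow, eval_sub, eval_X, eval_C, eval_natCast,
      nsmul_eq_mul, smul_eq_mul, Nat.choose_one_right, Nat.add_sub_cancel]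
    push_cast
    ring
  · intro k hk hk0
    match k, hk0 with
    | 0, _ =>
      rw [Nat.sub_zero, show n+2 = (n+1)+1 from rfl, Function.iterate_succ_apply',
        iterate_derivative_X_sub_pow_self]
      simp
    | (k+2), _ =>
      have hkle : k + 2 ≤ n + 2 := by simp at hk; omega
      have he : (n+1) - ((n+2) - (k+2)) = k+1 := by omega
      simp only [iterate_derivative_X_sub_pow, he, smul_mul_smul_comm, eval_smul, eval_mul,
        eval_pow, eval_sub, eval_X, eval_C, sub_self]
      rw [zero_pow (Nat.succ_ne_zero k)]
      simp
  · intro h; simp at h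

lemma B2 (n : ℕ) : (derivative^[n+2] ((X^2-1:ℝ[X])^(n+1))).eval (-1)
    = (n+2) * ((n+1) * ((-2)^n * (n+1).factorial)) := by
  rw [factor_pow, iterate_derivative_mul, eval_finset_sum]
  rw [Finset.sum_eq_single (n+1)]
  · have h1 : (n+2) - (n+1) = 1 := by omega
    rw [h1, iterate_derivative_X_sub_pow_self]
    simp only [Function.iterate_one, iterate_derivative_X_sub_pow, Nat.descFactorial_one,
      eval_smul, eval_mul, eval_pow, eval_sub, eval_X, eval_C, eval_natCast,
      nsmul_eq_mul, smul_eq_mul, Nat.choose_succ_self_right, Nat.succ_sub_one]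
    push_cast
    ring
  · intro k hk hk0
    rcases Nat.lt_or_ge k (n+1) with hlt | hge
    · have hnk : (n+1) - k ≠ 0 := by omega
      simp only [iterate_derivative_X_sub_pow, smul_mul_smul_comm, eval_smul, eval_mul,
        eval_pow, eval_sub, eval_X, eval_C]
      rw [show (-1 : ℝ) - (-1) = 0 by ring, zero_pow hnk]
      simp
    · have hk2 : k = n + 2 := by simp at hk; omega
      subst hk2
      rw [show n+2 = (n+1)+1 from rfl, Function.iterate_succ_apply',
        iterate_derivative_X_sub_pow_self]
      simp
  · intro h; simp at h



lemma legendre_eval_one (n : ℕ) : (legendre n).eval 1 = 1 := by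
  unfold legendre
  rw [eval_mul, eval_C, A1]
  have h3 : (0:ℝ) < ((n).factorial : ℝ) := by positivity
  field_simp

lemma legendre_eval_negone (n : ℕ) : (legendre n).eval (-1) = (-1)^n := by
  unfold legendre
  rw [eval_mul, eval_C, A2]
  have h3 : (0:ℝ) < ((n).factorial : ℝ) := by positivity
  have h6 : ((-2:ℝ))^n = (-1)^n * 2^n := by rw [← mul_pow]; norm_num
  rw [h6]
  field_simp

lemma dlegendre (n : ℕ) : derivative (legendre (n+1))
    = C ((1 : ℝ) / (2 ^ (n+1) * (n+1).factorial)) * derivative^[n+2] ((X ^ 2 - 1) ^ (n+1)) := by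
  unfold legendre
  rw [derivative_C_mul, ← Function.iterate_succ_apply' derivative]

lemma dlegendre_eval_one (n : ℕ) :
    (derivative (legendre (n+1))).eval 1 = ((n:ℝ)+1)*((n:ℝ)+2)/2 := by
  rw [dlegendre, eval_mul, eval_C, B1]
  have h3 : (0:ℝ) < (((n+1)).factorial : ℝ) := by positivity
  rw [pow_succ]
  push_cast
  field_simp

lemma dlegendre_eval_negone (n : ℕ) :
    (derivative (legendre (n+1))).eval (-1) = (-1)^n * (((n:ℝ)+1)*((n:ℝ)+2)/2) := by
  rw [dlegendre, eval_mul, eval_C, B2]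
  have h3 : (0:ℝ) < (((n+1)).factorial : ℝ) := by positivity
  have h6 : ((-2:ℝ))^n = (-1)^n * 2^n := by rw [← mul_pow]; norm_num
  rw [pow_succ, h6]
  push_cast
  field_simp



noncomputable def LL (m n : ℕ) : ℝ :=
  ∫ x in (-1:ℝ)..1, (legendre m).eval x * (legendre n).eval x

lemma LL_symm (m n : ℕ) : LL m n = LL n m := by
  unfold LL
  simp_rw [mul_comm]

lemma LL_eq (m n : ℕ) : LL m n = if m = n then 2/(2*(n:ℝ)+1) else 0 := by
  rcases lt_trichotomy m n with h | h | h
  · rw [if_neg (by omega), LL_symm]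
    exact legendre_orth n (legendre m) (lt_of_le_of_lt (natDegree_legendre_le m) h)
  · subst h; rw [if_pos rfl]; exact legendre_norm m
  · rw [if_neg (by omega)]
    exact legendre_orth m (legendre n) (lt_of_le_of_lt (natDegree_legendre_le n) h)

noncomputable def DD (m n : ℕ) : ℝ :=
  ∫ x in (-1:ℝ)..1, (derivative (legendre m)).eval x * (derivative (legendre n)).eval x

lemma DD_symm (m n : ℕ) : DD m n = DD n m := by
  unfold DD
  simp_rw [mul_comm]

lemma DD_le (a b : ℕ) (h : b ≤ a) : DD (a+1) (b+1)
    = (1 + (-1:ℝ)^(a+b)) * (((b:ℝ)+1)*((b:ℝ)+2)/2) := by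
  unfold DD
  rw [integral_parts (legendre (a+1)) (derivative (legendre (b+1)))]
  have horth : (∫ x in (-1:ℝ)..1,
      (legendre (a+1)).eval x * (derivative (derivative (legendre (b+1)))).eval x) = 0 := by
    apply legendre_orth
    have h1 := natDegree_derivative_le (derivative (legendre (b+1)))
    have h2 := natDegree_derivative_le (legendre (b+1))
    have h3 := natDegree_legendre_le (b+1)
    omega
  rw [horth, legendre_eval_one, legendre_eval_negone, dlegendre_eval_one,
    dlegendre_eval_negone, pow_succ, pow_add]
  ring








noncomputable def aa (t : ℕ) : ℝ := (Real.sqrt (2 * (2*(t:ℝ)+1)))⁻¹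
noncomputable def cc (t : ℕ) : ℝ := Real.sqrt ((2*(t:ℝ)+1)/2)

lemma ac_half (t : ℕ) : aa t * cc t = 1/2 := by
  unfold aa cc
  rw [← Real.sqrt_inv, ← Real.sqrt_mul (by positivity)]
  have h : (2 * (2*(t:ℝ)+1))⁻¹ * ((2*(t:ℝ)+1)/2) = 1/4 := by
    have : (2*(t:ℝ)+1) > 0 := by positivity
    field_simp
    ring
  rw [h, show (1/4:ℝ) = (1/2)^2 by norm_num, Real.sqrt_sq (by norm_num)]

lemma ii (p q : ℝ[X]) : IntervalIntegrable (fun x => p.eval x * q.eval x)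
    volume (-1:ℝ) 1 := (p.continuous.mul q.continuous).intervalIntegrable _ _

lemma mass_entry (N : ℕ) (i k : Fin (N-1)) :
    massMatrix N i k = aa ((i:ℕ)+1) * aa ((k:ℕ)+1) *
      (LL ((k:ℕ)+2) ((i:ℕ)+2) - LL ((k:ℕ)+2) (i:ℕ) - LL (k:ℕ) ((i:ℕ)+2) + LL (k:ℕ) (i:ℕ)) := by
  have hstep : massMatrix N i k = ∫ x in (-1:ℝ)..1,
      aa ((i:ℕ)+1) * aa ((k:ℕ)+1) *
      ((legendre ((k:ℕ)+2)).eval x * (legendre ((i:ℕ)+2)).eval x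
        - (legendre ((k:ℕ)+2)).eval x * (legendre (i:ℕ)).eval x
        - (legendre (k:ℕ)).eval x * (legendre ((i:ℕ)+2)).eval x
        + (legendre (k:ℕ)).eval x * (legendre (i:ℕ)).eval x) := by
    show (∫ x in (-1:ℝ)..1, psiF ((k:ℕ)+1) x * psiF ((i:ℕ)+1) x) = _
    apply intervalIntegral.integral_congr
    intro x _
    unfold psiF aa
    simp only [Nat.add_sub_cancel]
    rw [show (k:ℕ)+1+1 = (k:ℕ)+2 from rfl, show (i:ℕ)+1+1 = (i:ℕ)+2 from rfl]
    push_cast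
    ring
  rw [hstep, intervalIntegral.integral_const_mul]
  unfold LL
  rw [intervalIntegral.integral_add (((ii _ _).sub (ii _ _)).sub (ii _ _)) (ii _ _),
    intervalIntegral.integral_sub ((ii _ _).sub (ii _ _)) (ii _ _),
    intervalIntegral.integral_sub (ii _ _) (ii _ _)]

lemma deriv_phiF (m : ℕ) (x : ℝ) :
    deriv (phiF m) x = cc m * (derivative (legendre m)).eval x := by
  unfold phiF cc
  exact (((legendre m).hasDerivAt x).const_mul _).deriv

lemma stiff_entry (N : ℕ) (k j : Fin (N-1)) :
    stiffMatrix N k j = cc ((j:ℕ)+1) * cc ((k:ℕ)+1) * DD ((j:ℕ)+1) ((k:ℕ)+1) := by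
  have hstep : stiffMatrix N k j = ∫ x in (-1:ℝ)..1,
      cc ((j:ℕ)+1) * cc ((k:ℕ)+1) *
        ((derivative (legendre ((j:ℕ)+1))).eval x * (derivative (legendre ((k:ℕ)+1))).eval x) := by
    show (∫ x in (-1:ℝ)..1, deriv (phiF ((j:ℕ)+1)) x * deriv (phiF ((k:ℕ)+1)) x) = _
    apply intervalIntegral.integral_congr
    intro x _
    simp only [deriv_phiF]
    ring
  rw [hstep, intervalIntegral.integral_const_mul]
  rfl
lemma DD_min (p q : ℕ) : DD (p+1) (q+1)
    = (1 + (-1:ℝ)^(p+q)) * ((((min p q : ℕ)):ℝ)+1) * ((((min p q : ℕ)):ℝ)+2) / 2 := by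
  rcases le_total q p with h | h
  · rw [DD_le p q h, min_eq_right h]; ring
  · rw [DD_symm, DD_le q p h, min_eq_left h, Nat.add_comm q p]; ring

/-- The first `N−3` rows of `MS` coincide with those of the identity:
`(MS)_{mn} = δ_{mn}` for `1 ≤ m ≤ N−3` and all `1 ≤ n ≤ N−1`. -/
theorem mass_stiff_first_rows (N : ℕ) (hN : 4 ≤ N) (i j : Fin (N - 1))
    (hi : (i : ℕ) + 1 ≤ N - 3) :
    (massMatrix N * stiffMatrix N) i j = if i = j then 1 else 0 := by
  have hiN : (i:ℕ) + 2 < N - 1 := by omega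
  have hjN : (j:ℕ) < N - 1 := j.isLt
  rw [Matrix.mul_apply]
  have hvan : ∀ k : Fin (N-1), (k:ℕ) + 2 ≠ (i:ℕ) → (k:ℕ) ≠ (i:ℕ) → (k:ℕ) ≠ (i:ℕ) + 2 →
      massMatrix N i k * stiffMatrix N k j = 0 := by
    intro k h1 h2 h3
    rw [mass_entry, LL_eq, LL_eq, LL_eq, LL_eq,
      if_neg (by omega), if_neg (by omega), if_neg (by omega), if_neg (by omega)]
    ring
  have E : ∀ t : Fin (N-1), massMatrix N i t * stiffMatrix N t j
      = aa ((i:ℕ)+1) * aa ((t:ℕ)+1) *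
          (LL ((t:ℕ)+2) ((i:ℕ)+2) - LL ((t:ℕ)+2) (i:ℕ) - LL (t:ℕ) ((i:ℕ)+2) + LL (t:ℕ) (i:ℕ))
        * (cc ((j:ℕ)+1) * cc ((t:ℕ)+1) * DD ((j:ℕ)+1) ((t:ℕ)+1)) := by
    intro t; rw [mass_entry, stiff_entry]
  have hI0 : LL ((i:ℕ)+2) ((i:ℕ)+2) - LL ((i:ℕ)+2) (i:ℕ) - LL (i:ℕ) ((i:ℕ)+2) + LL (i:ℕ) (i:ℕ)
      = 2/(2*(((i:ℕ):ℝ)+2)+1) + 2/(2*((i:ℕ):ℝ)+1) := by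
    rw [LL_eq, LL_eq, LL_eq, LL_eq, if_pos rfl, if_neg (by omega), if_neg (by omega), if_pos rfl]
    push_cast
    ring
  have hI2 : LL ((i:ℕ)+2+2) ((i:ℕ)+2) - LL ((i:ℕ)+2+2) (i:ℕ) - LL ((i:ℕ)+2) ((i:ℕ)+2)
        + LL ((i:ℕ)+2) (i:ℕ) = -(2/(2*(((i:ℕ):ℝ)+2)+1)) := by
    rw [LL_eq, LL_eq, LL_eq, LL_eq, if_neg (by omega), if_neg (by omega), if_pos rfl,
      if_neg (by omega)]
    push_cast
    ring
  set k2 : Fin (N-1) := ⟨(i:ℕ)+2, hiN⟩ with hk2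
  have hk2v : (k2:ℕ) = (i:ℕ)+2 := rfl
  rcases Nat.lt_or_ge (i:ℕ) 2 with hu2 | hu2
  · -- small case: only k = i, k2
    have hsum : (∑ k : Fin (N-1), massMatrix N i k * stiffMatrix N k j)
        = massMatrix N i i * stiffMatrix N i j + massMatrix N i k2 * stiffMatrix N k2 j := by
      have hss : ∀ x ∈ Finset.univ, x ∉ ({i, k2} : Finset (Fin (N-1))) →
          massMatrix N i x * stiffMatrix N x j = 0 := by
        intro x _ hx
        simp only [Finset.mem_insert, Finset.mem_singleton, Fin.ext_iff, hk2v] at hx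
        push_neg at hx
        refine hvan x ?_ ?_ ?_
        · omega
        · omega
        · omega
      rw [← Finset.sum_subset (Finset.subset_univ _) hss]
      rw [Finset.sum_insert (by simp only [Finset.mem_singleton, Fin.ext_iff, hk2v]; omega),
        Finset.sum_singleton]
    rw [hsum, E i, E k2, hk2v, hI0, hI2]
    rcases Nat.even_or_odd ((i:ℕ)+(j:ℕ)) with hpar | hpar
    · have hvu : (j:ℕ) = (i:ℕ) ∨ (j:ℕ) ≥ (i:ℕ)+2 := by
        rw [Nat.even_iff] at hpar; omega
      rcases hvu with hvu | hvu
      · have hij : i = j := Fin.ext (by omega)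
        subst hij
        rw [if_pos rfl]
        have hD0 : DD ((i:ℕ)+1) ((i:ℕ)+1) = (((i:ℕ):ℝ)+1)*(((i:ℕ):ℝ)+2) := by
          rw [DD_min, Even.neg_one_pow (by rw [Nat.even_iff] at hpar ⊢; omega), min_self]
          ring
        have hD2 : DD ((i:ℕ)+1) ((i:ℕ)+2+1) = (((i:ℕ):ℝ)+1)*(((i:ℕ):ℝ)+2) := by
          rw [DD_min, Even.neg_one_pow (by rw [Nat.even_iff] at hpar ⊢; omega),
            min_eq_left (by omega)]
          ring
        rw [hD0, hD2]
        have hu01 : ((i:ℕ):ℝ)^2 = ((i:ℕ):ℝ) := by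
          have : (i:ℕ) = 0 ∨ (i:ℕ) = 1 := by omega
          rcases this with h | h <;> rw [h] <;> norm_num
        have d1 : (2*(((i:ℕ):ℝ))+1) ≠ 0 := by positivity
        have d2 : (2*(((i:ℕ):ℝ)+2)+1) ≠ 0 := by positivity
        have hT : (2/(2*(((i:ℕ):ℝ)+2)+1) + 2/(2*((i:ℕ):ℝ)+1)) * ((((i:ℕ):ℝ)+1)*(((i:ℕ):ℝ)+2))
            + (-(2/(2*(((i:ℕ):ℝ)+2)+1))) * ((((i:ℕ):ℝ)+1)*(((i:ℕ):ℝ)+2)) = 4 := by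
          rcases (show (i:ℕ) = 0 ∨ (i:ℕ) = 1 by omega) with h | h <;> rw [h] <;> norm_num
        linear_combination
          (aa ((i:ℕ)+1) * cc ((i:ℕ)+1) * ((2/(2*(((i:ℕ):ℝ)+2)+1) + 2/(2*((i:ℕ):ℝ)+1))
            * ((((i:ℕ):ℝ)+1)*(((i:ℕ):ℝ)+2)))) * ac_half ((i:ℕ)+1)
          + (aa ((i:ℕ)+1) * cc ((i:ℕ)+1) * ((-(2/(2*(((i:ℕ):ℝ)+2)+1)))
            * ((((i:ℕ):ℝ)+1)*(((i:ℕ):ℝ)+2)))) * ac_half ((i:ℕ)+2+1)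
          + (aa ((i:ℕ)+1) * cc ((i:ℕ)+1) / 2) * hT
          + 2 * ac_half ((i:ℕ)+1)
      · -- j ≥ i+2
        rw [if_neg (by intro h; rw [Fin.ext_iff] at h; omega)]
        have hD0 : DD ((j:ℕ)+1) ((i:ℕ)+1) = (((i:ℕ):ℝ)+1)*(((i:ℕ):ℝ)+2) := by
          rw [DD_min, Even.neg_one_pow (by rw [Nat.even_iff] at hpar ⊢; omega),
            min_eq_right (by omega)]
          ring
        have hD2 : DD ((j:ℕ)+1) ((i:ℕ)+2+1) = (((i:ℕ):ℝ)+3)*(((i:ℕ):ℝ)+4) := by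
          rw [DD_min, Even.neg_one_pow (by rw [Nat.even_iff] at hpar ⊢; omega),
            min_eq_right (by omega)]
          push_cast
          ring
        rw [hD0, hD2]
        have hu01 : ((i:ℕ):ℝ)^2 = ((i:ℕ):ℝ) := by
          have : (i:ℕ) = 0 ∨ (i:ℕ) = 1 := by omega
          rcases this with h | h <;> rw [h] <;> norm_num
        have d1 : (2*(((i:ℕ):ℝ))+1) ≠ 0 := by positivity
        have d2 : (2*(((i:ℕ):ℝ)+2)+1) ≠ 0 := by positivity
        have hT : (2/(2*(((i:ℕ):ℝ)+2)+1) + 2/(2*((i:ℕ):ℝ)+1)) * ((((i:ℕ):ℝ)+1)*(((i:ℕ):ℝ)+2))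
            + (-(2/(2*(((i:ℕ):ℝ)+2)+1))) * ((((i:ℕ):ℝ)+3)*(((i:ℕ):ℝ)+4)) = 0 := by
          rcases (show (i:ℕ) = 0 ∨ (i:ℕ) = 1 by omega) with h | h <;> rw [h] <;> norm_num
        linear_combination
          (aa ((i:ℕ)+1) * cc ((j:ℕ)+1) * ((2/(2*(((i:ℕ):ℝ)+2)+1) + 2/(2*((i:ℕ):ℝ)+1))
            * ((((i:ℕ):ℝ)+1)*(((i:ℕ):ℝ)+2)))) * ac_half ((i:ℕ)+1)
          + (aa ((i:ℕ)+1) * cc ((j:ℕ)+1) * ((-(2/(2*(((i:ℕ):ℝ)+2)+1)))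
            * ((((i:ℕ):ℝ)+3)*(((i:ℕ):ℝ)+4)))) * ac_half ((i:ℕ)+2+1)
          + (aa ((i:ℕ)+1) * cc ((j:ℕ)+1) / 2) * hT
    · -- odd parity
      have hD0 : DD ((j:ℕ)+1) ((i:ℕ)+1) = 0 := by
        rw [DD_min, Odd.neg_one_pow (by rw [Nat.odd_iff] at hpar ⊢; omega)]
        ring
      have hD2 : DD ((j:ℕ)+1) ((i:ℕ)+2+1) = 0 := by
        rw [DD_min, Odd.neg_one_pow (by rw [Nat.odd_iff] at hpar ⊢; omega)]
        ring
      have hne : ¬ (i = j) := by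
        intro h
        rw [Fin.ext_iff] at h
        rw [Nat.odd_iff] at hpar
        omega
      rw [hD0, hD2, if_neg hne]
      ring
  · -- large case: i ≥ 2
    set k1 : Fin (N-1) := ⟨(i:ℕ)-2, by omega⟩ with hk1
    have hk1v : (k1:ℕ) = (i:ℕ)-2 := rfl
    have hI1 : LL ((i:ℕ)-2+2) ((i:ℕ)+2) - LL ((i:ℕ)-2+2) (i:ℕ) - LL ((i:ℕ)-2) ((i:ℕ)+2)
        + LL ((i:ℕ)-2) (i:ℕ) = -(2/(2*((i:ℕ):ℝ)+1)) := by
      rw [show (i:ℕ)-2+2 = (i:ℕ) by omega]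
      rw [LL_eq, LL_eq, LL_eq, LL_eq, if_neg (by omega), if_pos rfl, if_neg (by omega),
        if_neg (by omega)]
      ring
    have hsum : (∑ k : Fin (N-1), massMatrix N i k * stiffMatrix N k j)
        = massMatrix N i k1 * stiffMatrix N k1 j + massMatrix N i i * stiffMatrix N i j
          + massMatrix N i k2 * stiffMatrix N k2 j := by
      have hss : ∀ x ∈ Finset.univ, x ∉ ({k1, i, k2} : Finset (Fin (N-1))) →
          massMatrix N i x * stiffMatrix N x j = 0 := by
        intro x _ hx
        simp only [Finset.mem_insert, Finset.mem_singleton, Fin.ext_iff, hk1v, hk2v] at hx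
        push_neg at hx
        refine hvan x ?_ ?_ ?_
        · omega
        · omega
        · omega
      rw [← Finset.sum_subset (Finset.subset_univ _) hss]
      rw [Finset.sum_insert (by
            simp only [Finset.mem_insert, Finset.mem_singleton, Fin.ext_iff, hk1v, hk2v]
            omega),
        Finset.sum_insert (by simp only [Finset.mem_singleton, Fin.ext_iff, hk2v]; omega),
        Finset.sum_singleton]
      ring
    rw [hsum, E k1, E i, E k2, hk1v, hk2v, hI1, hI0, hI2]
    have d1 : (2*(((i:ℕ):ℝ))+1) ≠ 0 := by positivity
    have d2 : (2*(((i:ℕ):ℝ)+2)+1) ≠ 0 := by positivity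
    rcases Nat.even_or_odd ((i:ℕ)+(j:ℕ)) with hpar | hpar
    · have hvu : (j:ℕ) = (i:ℕ) ∨ (j:ℕ) ≤ (i:ℕ)-2 ∨ (j:ℕ) ≥ (i:ℕ)+2 := by
        rw [Nat.even_iff] at hpar; omega
      rcases hvu with hvu | hvu | hvu
      · have hij : i = j := Fin.ext (by omega)
        subst hij
        rw [if_pos rfl]
        have hD1 : DD ((i:ℕ)+1) ((i:ℕ)-2+1) = (((i:ℕ):ℝ)-1)*((i:ℕ):ℝ) := by
          rw [DD_min, Even.neg_one_pow (by rw [Nat.even_iff] at hpar ⊢; omega),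
            min_eq_right (by omega)]
          push_cast [Nat.cast_sub hu2]
          ring
        have hD0 : DD ((i:ℕ)+1) ((i:ℕ)+1) = (((i:ℕ):ℝ)+1)*(((i:ℕ):ℝ)+2) := by
          rw [DD_min, Even.neg_one_pow (by rw [Nat.even_iff] at hpar ⊢; omega), min_self]
          ring
        have hD2 : DD ((i:ℕ)+1) ((i:ℕ)+2+1) = (((i:ℕ):ℝ)+1)*(((i:ℕ):ℝ)+2) := by
          rw [DD_min, Even.neg_one_pow (by rw [Nat.even_iff] at hpar ⊢; omega),
            min_eq_left (by omega)]
          ring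
        rw [hD1, hD0, hD2]
        have hT : (-(2/(2*((i:ℕ):ℝ)+1))) * ((((i:ℕ):ℝ)-1)*((i:ℕ):ℝ))
            + (2/(2*(((i:ℕ):ℝ)+2)+1) + 2/(2*((i:ℕ):ℝ)+1)) * ((((i:ℕ):ℝ)+1)*(((i:ℕ):ℝ)+2))
            + (-(2/(2*(((i:ℕ):ℝ)+2)+1))) * ((((i:ℕ):ℝ)+1)*(((i:ℕ):ℝ)+2)) = 4 := by
          field_simp
          ring
        linear_combination
          (aa ((i:ℕ)+1) * cc ((i:ℕ)+1) * ((-(2/(2*((i:ℕ):ℝ)+1)))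
            * ((((i:ℕ):ℝ)-1)*((i:ℕ):ℝ)))) * ac_half ((i:ℕ)-2+1)
          + (aa ((i:ℕ)+1) * cc ((i:ℕ)+1) * ((2/(2*(((i:ℕ):ℝ)+2)+1) + 2/(2*((i:ℕ):ℝ)+1))
            * ((((i:ℕ):ℝ)+1)*(((i:ℕ):ℝ)+2)))) * ac_half ((i:ℕ)+1)
          + (aa ((i:ℕ)+1) * cc ((i:ℕ)+1) * ((-(2/(2*(((i:ℕ):ℝ)+2)+1)))
            * ((((i:ℕ):ℝ)+1)*(((i:ℕ):ℝ)+2)))) * ac_half ((i:ℕ)+2+1)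
          + (aa ((i:ℕ)+1) * cc ((i:ℕ)+1) / 2) * hT
          + 2 * ac_half ((i:ℕ)+1)
      · -- j ≤ i-2
        rw [if_neg (by intro h; rw [Fin.ext_iff] at h; omega)]
        have hD1 : DD ((j:ℕ)+1) ((i:ℕ)-2+1) = (((j:ℕ):ℝ)+1)*(((j:ℕ):ℝ)+2) := by
          rw [DD_min, Even.neg_one_pow (by rw [Nat.even_iff] at hpar ⊢; omega),
            min_eq_left (by omega)]
          ring
        have hD0 : DD ((j:ℕ)+1) ((i:ℕ)+1) = (((j:ℕ):ℝ)+1)*(((j:ℕ):ℝ)+2) := by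
          rw [DD_min, Even.neg_one_pow (by rw [Nat.even_iff] at hpar ⊢; omega),
            min_eq_left (by omega)]
          ring
        have hD2 : DD ((j:ℕ)+1) ((i:ℕ)+2+1) = (((j:ℕ):ℝ)+1)*(((j:ℕ):ℝ)+2) := by
          rw [DD_min, Even.neg_one_pow (by rw [Nat.even_iff] at hpar ⊢; omega),
            min_eq_left (by omega)]
          ring
        rw [hD1, hD0, hD2]
        have hT : (-(2/(2*((i:ℕ):ℝ)+1))) * ((((j:ℕ):ℝ)+1)*(((j:ℕ):ℝ)+2))
            + (2/(2*(((i:ℕ):ℝ)+2)+1) + 2/(2*((i:ℕ):ℝ)+1)) * ((((j:ℕ):ℝ)+1)*(((j:ℕ):ℝ)+2))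
            + (-(2/(2*(((i:ℕ):ℝ)+2)+1))) * ((((j:ℕ):ℝ)+1)*(((j:ℕ):ℝ)+2)) = 0 := by
          field_simp
          ring
        linear_combination
          (aa ((i:ℕ)+1) * cc ((j:ℕ)+1) * ((-(2/(2*((i:ℕ):ℝ)+1)))
            * ((((j:ℕ):ℝ)+1)*(((j:ℕ):ℝ)+2)))) * ac_half ((i:ℕ)-2+1)
          + (aa ((i:ℕ)+1) * cc ((j:ℕ)+1) * ((2/(2*(((i:ℕ):ℝ)+2)+1) + 2/(2*((i:ℕ):ℝ)+1))
            * ((((j:ℕ):ℝ)+1)*(((j:ℕ):ℝ)+2)))) * ac_half ((i:ℕ)+1)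
          + (aa ((i:ℕ)+1) * cc ((j:ℕ)+1) * ((-(2/(2*(((i:ℕ):ℝ)+2)+1)))
            * ((((j:ℕ):ℝ)+1)*(((j:ℕ):ℝ)+2)))) * ac_half ((i:ℕ)+2+1)
          + (aa ((i:ℕ)+1) * cc ((j:ℕ)+1) / 2) * hT
      · -- j ≥ i+2
        rw [if_neg (by intro h; rw [Fin.ext_iff] at h; omega)]
        have hD1 : DD ((j:ℕ)+1) ((i:ℕ)-2+1) = (((i:ℕ):ℝ)-1)*((i:ℕ):ℝ) := by
          rw [DD_min, Even.neg_one_pow (by rw [Nat.even_iff] at hpar ⊢; omega),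
            min_eq_right (by omega)]
          push_cast [Nat.cast_sub hu2]
          ring
        have hD0 : DD ((j:ℕ)+1) ((i:ℕ)+1) = (((i:ℕ):ℝ)+1)*(((i:ℕ):ℝ)+2) := by
          rw [DD_min, Even.neg_one_pow (by rw [Nat.even_iff] at hpar ⊢; omega),
            min_eq_right (by omega)]
          ring
        have hD2 : DD ((j:ℕ)+1) ((i:ℕ)+2+1) = (((i:ℕ):ℝ)+3)*(((i:ℕ):ℝ)+4) := by
          rw [DD_min, Even.neg_one_pow (by rw [Nat.even_iff] at hpar ⊢; omega),
            min_eq_right (by omega)]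
          push_cast
          ring
        rw [hD1, hD0, hD2]
        have hT : (-(2/(2*((i:ℕ):ℝ)+1))) * ((((i:ℕ):ℝ)-1)*((i:ℕ):ℝ))
            + (2/(2*(((i:ℕ):ℝ)+2)+1) + 2/(2*((i:ℕ):ℝ)+1)) * ((((i:ℕ):ℝ)+1)*(((i:ℕ):ℝ)+2))
            + (-(2/(2*(((i:ℕ):ℝ)+2)+1))) * ((((i:ℕ):ℝ)+3)*(((i:ℕ):ℝ)+4)) = 0 := by
          field_simp
          ring
        linear_combination
          (aa ((i:ℕ)+1) * cc ((j:ℕ)+1) * ((-(2/(2*((i:ℕ):ℝ)+1)))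
            * ((((i:ℕ):ℝ)-1)*((i:ℕ):ℝ)))) * ac_half ((i:ℕ)-2+1)
          + (aa ((i:ℕ)+1) * cc ((j:ℕ)+1) * ((2/(2*(((i:ℕ):ℝ)+2)+1) + 2/(2*((i:ℕ):ℝ)+1))
            * ((((i:ℕ):ℝ)+1)*(((i:ℕ):ℝ)+2)))) * ac_half ((i:ℕ)+1)
          + (aa ((i:ℕ)+1) * cc ((j:ℕ)+1) * ((-(2/(2*(((i:ℕ):ℝ)+2)+1)))
            * ((((i:ℕ):ℝ)+3)*(((i:ℕ):ℝ)+4)))) * ac_half ((i:ℕ)+2+1)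
          + (aa ((i:ℕ)+1) * cc ((j:ℕ)+1) / 2) * hT
    · -- odd parity
      have hD1 : DD ((j:ℕ)+1) ((i:ℕ)-2+1) = 0 := by
        rw [DD_min, Odd.neg_one_pow (by rw [Nat.odd_iff] at hpar ⊢; omega)]
        ring
      have hD0 : DD ((j:ℕ)+1) ((i:ℕ)+1) = 0 := by
        rw [DD_min, Odd.neg_one_pow (by rw [Nat.odd_iff] at hpar ⊢; omega)]
        ring
      have hD2 : DD ((j:ℕ)+1) ((i:ℕ)+2+1) = 0 := by
        rw [DD_min, Odd.neg_one_pow (by rw [Nat.odd_iff] at hpar ⊢; omega)]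
        ring
      have hne : ¬ (i = j) := by
        intro h
        rw [Fin.ext_iff] at h
        rw [Nat.odd_iff] at hpar
        omega
      rw [hD1, hD0, hD2, if_neg hne]
      ring
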